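/- Let (H, G, φ, R) be a relative Rota-Baxter group. Then the operation h₁ ∘ h₂ = h₁ · φ_{R(h₁)}(h₂) defines a group structure on the underlying set of H. -/
import Mathlib


/-- For a relative Rota-Baxter group `(H, G, φ, R)`, the operation
`h₁ ∘ h₂ = h₁ * φ_{R h₁} h₂` is a group operation on `H` (associative, with `1` as
two-sided identity, and two-sided inverses). -/
theorem descendent_group_structure {H G : Type*} [Group H] [Group G]
    (φ : G →* MulAut H) (R : H → G)
    (hR : ∀ h₁ h₂ : H, R h₁ * R h₂ = R (h₁ * φ (R h₁) h₂)) :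
    (∀ a b c : H,
      (a * φ (R a) b) * φ (R (a * φ (R a) b)) c = a * φ (R a) (b * φ (R b) c)) ∧
    (∀ a : H, 1 * φ (R 1) a = a ∧ a * φ (R a) 1 = a) ∧
    (∀ a : H, ∃ b : H, a * φ (R a) b = 1 ∧ b * φ (R b) a = 1) := by
  -- associativity
  have assoc : ∀ a b c : H,
      (a * φ (R a) b) * φ (R (a * φ (R a) b)) c = a * φ (R a) (b * φ (R b) c) := by
    intro a b c
    rw [← hR a b, map_mul, map_mul]
    simp [mul_assoc]
  -- R 1 = 1
  have hR1 : R (1 : H) = 1 := by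
    have h := hR 1 1
    simp at h
    exact h
  have one_law : ∀ a : H, 1 * φ (R 1) a = a ∧ a * φ (R a) 1 = a := by
    intro a
    constructor
    · simp [hR1]
    · simp
  refine ⟨assoc, one_law, ?_⟩
  -- right inverse
  have rinv : ∀ a : H, a * φ (R a) ((φ (R a))⁻¹ a⁻¹) = 1 := by
    intro a
    simp
  intro a
  set b := (φ (R a))⁻¹ a⁻¹ with hb
  refine ⟨b, rinv a, ?_⟩
  set c := (φ (R b))⁻¹ b⁻¹ with hc
  -- b ∘ a = (b ∘ a) ∘ (b ∘ c) = b ∘ ((a ∘ b) ∘ c) = b ∘ c = 1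
  have h1 : b * φ (R b) c = 1 := rinv b
  calc b * φ (R b) a
      = (b * φ (R b) a) * φ (R (b * φ (R b) a)) (b * φ (R b) c) := by
        rw [h1]; simp
    _ = b * φ (R b) (a * φ (R a) (b * φ (R b) c)) := assoc b a (b * φ (R b) c)
    _ = b * φ (R b) ((a * φ (R a) b) * φ (R (a * φ (R a) b)) c) := by
        rw [assoc a b c]
    _ = 1 := by rw [rinv a]; simpa [hR1] using h1
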